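/- Let n be a positive integer whose binary representation (with no leading zeros) contains exactly s ones and z zeros (so s ≥ 1). Then f(n) ≤ 3s + 2z − 2. -/

import Mathlib

/-- `CanRepr n k` means the positive integer `n` can be built from exactly `k` ones
using additions and multiplications. -/
inductive CanRepr : ℕ → ℕ → Prop
  | one : CanRepr 1 1
  | add : ∀ {a b j k : ℕ}, CanRepr a j → CanRepr b k → CanRepr (a + b) (j + k)
  | mul : ∀ {a b j k : ℕ}, CanRepr a j → CanRepr b k → CanRepr (a * b) (j + k)

/-- The integer complexity `f(n)`: the least number of 1's needed to express `n`
using 1's, `+`, `*`, and parentheses. -/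
noncomputable def complexity (n : ℕ) : ℕ := sInf {k | CanRepr n k}

lemma canRepr_exact : ∀ n : ℕ, 0 < n →
    1 ≤ (Nat.digits 2 n).count 1 ∧
    CanRepr n (3 * (Nat.digits 2 n).count 1 + 2 * (Nat.digits 2 n).count 0 - 2) := by
  intro n
  induction n using Nat.strong_induction_on with
  | _ n ih =>
    intro hn
    rcases Nat.lt_or_ge n 2 with h2 | h2
    · interval_cases n
      · simp
        exact CanRepr.one
    · have hne : n ≠ 0 := by omega
      have hdig : Nat.digits 2 n = n % 2 :: Nat.digits 2 (n / 2) :=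
        Nat.digits_def' (by norm_num) (by omega)
      have hm : 0 < n / 2 := Nat.div_pos h2 (by norm_num)
      obtain ⟨hs1, hC⟩ := ih (n / 2) (Nat.div_lt_self hn (by norm_num)) hm
      set s' := (Nat.digits 2 (n / 2)).count 1 with hs'
      set z' := (Nat.digits 2 (n / 2)).count 0 with hz'
      rcases Nat.mod_two_eq_zero_or_one n with hb | hb
      · rw [hdig, hb]
        have hc1 : List.count 1 (0 :: Nat.digits 2 (n/2)) = s' := by simp [hs']
        have hc0 : List.count 0 (0 :: Nat.digits 2 (n/2)) = z' + 1 := by simp [hz']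
        rw [hc1, hc0]
        refine ⟨hs1, ?_⟩
        have key : CanRepr n ((1 + 1) + (3 * s' + 2 * z' - 2)) := by
          have hn2 : n = 2 * (n / 2) := by omega
          rw [hn2]
          exact CanRepr.mul (CanRepr.add CanRepr.one CanRepr.one) hC
        convert key using 1
        omega
      · rw [hdig, hb]
        have hc1 : List.count 1 (1 :: Nat.digits 2 (n/2)) = s' + 1 := by simp [hs']
        have hc0 : List.count 0 (1 :: Nat.digits 2 (n/2)) = z' := by simp [hz']
        rw [hc1, hc0]
        refine ⟨by omega, ?_⟩
        have key : CanRepr n (((1 + 1) + (3 * s' + 2 * z' - 2)) + 1) := by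
          have hn2 : n = (2 * (n / 2)) + 1 := by omega
          rw [hn2]
          exact CanRepr.add (CanRepr.mul (CanRepr.add CanRepr.one CanRepr.one) hC)
            CanRepr.one
        convert key using 1
        omega

theorem stmt_10 (n : ℕ) (hn : 0 < n) (s z : ℕ)
    (hs : s = (Nat.digits 2 n).count 1) (hz : z = (Nat.digits 2 n).count 0) :
    complexity n ≤ 3 * s + 2 * z - 2 := by
  subst hs hz
  exact Nat.sInf_le (canRepr_exact n hn).2
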